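/- Let a = 31207386885274502188173522132023665167365193670823768234185354856354918873864275 and M = 36812852443922071184402498913076070503146229820861211558347078871354783744850778, and for n ∈ ℕ set u_n = F_{3n}/2. Then for every integer x with x ≡ a (mod M) and all k, b ∈ ℕ, one has x² − u_{30+90k} ≠ 42391^b and x² − u_{30+90k} ≠ −42391^b. -/
import Mathlib


/-- `u n = F_{3n} / 2`, an integer since `F_{3n}` is always even. -/
def u (n : ℕ) : ℤ := (Nat.fib (3 * n) : ℤ) / 2

set_option maxRecDepth 100000

private lemma fib_add_270 (n : ℕ) : (Nat.fib (n + 270) : ZMod 271) = Nat.fib n := by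
  have h := Nat.fib_add n 269
  have h1 : (Nat.fib 269 : ZMod 271) = 1 := by decide
  have h2 : (Nat.fib 270 : ZMod 271) = 0 := by decide
  have : (n + 270) = n + 269 + 1 := rfl
  rw [this, h]
  push_cast
  rw [h1, h2]
  ring

private lemma fib_period (k : ℕ) : (Nat.fib (90 + 270 * k) : ZMod 271) = Nat.fib 90 := by
  induction k with
  | zero => rfl
  | succ k ih =>
      have : 90 + 270 * (k + 1) = (90 + 270 * k) + 270 := by ring
      rw [this, fib_add_270, ih]

private lemma pow_115 (b : ℕ) : (115 : ZMod 271) ^ b = 115 ^ (b % 54) := by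
  conv_lhs => rw [← Nat.div_add_mod b 54, pow_add, pow_mul]
  have h54 : (115 : ZMod 271) ^ 54 = 1 := by decide
  rw [h54, one_pow, one_mul]

/-- Case 4.16 of the proof of Theorem 1.3: for every integer
`x ≡ a (mod M)` and all `k, b ∈ ℕ`, `x² - u_{30+90k}` is not `±42391^b`. -/
theorem sq_sub_u_ne_pm_pow_42391
    (x : ℤ)
    (hx : x ≡ 31207386885274502188173522132023665167365193670823768234185354856354918873864275
      [ZMOD 36812852443922071184402498913076070503146229820861211558347078871354783744850778])
    (k b : ℕ) :
    x ^ 2 - u (30 + 90 * k) ≠ 42391 ^ b ∧ x ^ 2 - u (30 + 90 * k) ≠ -(42391 ^ b) := by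
  -- reduce mod 271
  have hdvd : (271 : ℤ) ∣ 36812852443922071184402498913076070503146229820861211558347078871354783744850778 := by
    norm_num
  have hx271 : x ≡ 31207386885274502188173522132023665167365193670823768234185354856354918873864275
      [ZMOD (271 : ℕ)] := by
    exact_mod_cast hx.of_dvd hdvd
  have hxc : (x : ZMod 271) = 85 := by
    have := (ZMod.intCast_eq_intCast_iff _ _ 271).mpr hx271
    rw [this]; decide
  -- 2 * u n = fib (3 n)
  have h2u : (2 : ℤ) * u (30 + 90 * k) = Nat.fib (3 * (30 + 90 * k)) := by
    have hd : (2 : ℤ) ∣ (Nat.fib (3 * (30 + 90 * k)) : ℤ) := by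
      have : Nat.fib 3 ∣ Nat.fib (3 * (30 + 90 * k)) := Nat.fib_dvd _ _ (Dvd.intro _ rfl)
      exact_mod_cast Int.natCast_dvd_natCast.mpr this
    exact Int.mul_ediv_cancel' hd
  have hfib : (Nat.fib (3 * (30 + 90 * k)) : ZMod 271) = 51 := by
    have h3 : 3 * (30 + 90 * k) = 90 + 270 * k := by ring
    rw [h3, fib_period]
    decide
  constructor <;> intro h
  · have h2 : (2 : ℤ) * x ^ 2 - Nat.fib (3 * (30 + 90 * k)) = 2 * 42391 ^ b := by
      rw [← h2u]; linarith
    have hz : (2 : ZMod 271) * (x : ZMod 271) ^ 2 - (Nat.fib (3 * (30 + 90 * k)) : ZMod 271)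
        = 2 * 115 ^ b := by
      have := congrArg (fun t : ℤ => (t : ZMod 271)) h2
      push_cast at this
      have e42 : (42391 : ZMod 271) = 115 := by decide
      rw [e42] at this
      exact this
    rw [hxc, hfib, pow_115] at hz
    have hlt : b % 54 < 54 := Nat.mod_lt _ (by norm_num)
    revert hz
    have : ∀ r < 54, (2 : ZMod 271) * (85 : ZMod 271) ^ 2 - 51 ≠ 2 * 115 ^ r := by decide
    exact this _ hlt
  · have h2 : (2 : ℤ) * x ^ 2 - Nat.fib (3 * (30 + 90 * k)) = -(2 * 42391 ^ b) := by
      rw [← h2u]; linarith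
    have hz : (2 : ZMod 271) * (x : ZMod 271) ^ 2 - (Nat.fib (3 * (30 + 90 * k)) : ZMod 271)
        = -(2 * 115 ^ b) := by
      have := congrArg (fun t : ℤ => (t : ZMod 271)) h2
      push_cast at this
      have e42 : (42391 : ZMod 271) = 115 := by decide
      rw [e42] at this
      exact this
    rw [hxc, hfib, pow_115] at hz
    have hlt : b % 54 < 54 := Nat.mod_lt _ (by norm_num)
    revert hz
    have : ∀ r < 54, (2 : ZMod 271) * (85 : ZMod 271) ^ 2 - 51 ≠ -(2 * 115 ^ r) := by decide
    exact this _ hlt
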